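/- Let G and H be countable groups, let p : G → H be a group homomorphism, let μ be a probability measure on G, and let μ' := p_*μ be its pushforward, defined by μ'(h) = Σ_{a ∈ G, p(a) = h} μ(a). Then for every g ∈ G one has F_{μ'}(e_H, p(g)) ≥ F_μ(e_G, g), where in each group the first-passage function is defined by the same path-sum formula. -/

import Mathlib

open scoped BigOperators

/-- Restricted first-passage function `F_μ(x, y; S)`: the total weight of paths from `x`
to `y` that avoid `S ∪ {y}` before arriving at `y`. -/
noncomputable def FP {G : Type*} [Group G] (μ : G → ℝ) (x y : G) (S : Set G) : ℝ :=
  ∑' k : ℕ,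
    ∑' f : {f : Fin (k + 1) → G // f 0 = x ∧ f (Fin.last k) = y ∧
        ∀ j : Fin k, f j.castSucc ∉ S ∪ {y}},
      ∏ j : Fin k, μ ((f.1 j.castSucc)⁻¹ * f.1 j.succ)

/-- `μ` is a probability measure on `G`. -/
def IsProb {G : Type*} (μ : G → ℝ) : Prop := (∀ g, 0 ≤ μ g) ∧ ∑' g, μ g = 1

namespace Stmt17Aux

open ENNReal

noncomputable section

variable {G : Type*} [Group G]

/-- position after `n` steps of the increment list `l`, starting at `x`. -/
def pos (x : G) (l : List G) (n : ℕ) : G := x * (l.take n).prod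

/-- list version of the path predicate -/
def PP (x y : G) (S : Set G) (l : List G) : Prop :=
  pos x l l.length = y ∧ ∀ n < l.length, pos x l n ∉ S ∪ {y}

/-- weight of an increment list -/
def wl (ν : G → ℝ≥0∞) (l : List G) : ℝ≥0∞ := (l.map ν).prod

/-- list form of the first-passage function -/
def FPL (ν : G → ℝ≥0∞) (x y : G) (S : Set G) : ℝ≥0∞ :=
  ∑' l : {l : List G // PP x y S l}, wl ν l

/-- `ℝ≥0∞` form of the first-passage function -/
def FPE (ν : G → ℝ≥0∞) (x y : G) (S : Set G) : ℝ≥0∞ :=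
  ∑' k : ℕ,
    ∑' f : {f : Fin (k + 1) → G // f 0 = x ∧ f (Fin.last k) = y ∧
        ∀ j : Fin k, f j.castSucc ∉ S ∪ {y}},
      ∏ j : Fin k, ν ((f.1 j.castSucc)⁻¹ * f.1 j.succ)

lemma pos_zero (x : G) (l : List G) : pos x l 0 = x := by simp [pos]

lemma pos_succ (x : G) (l : List G) {n : ℕ} (h : n < l.length) :
    pos x l (n + 1) = pos x l n * l.get ⟨n, h⟩ := by
  simp [pos, List.prod_take_succ _ _ h, mul_assoc]

lemma pos_length (x : G) (l : List G) : pos x l l.length = x * l.prod := by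
  simp [pos, List.take_length]

lemma wl_nil (ν : G → ℝ≥0∞) : wl ν [] = 1 := by simp [wl]

lemma wl_cons (ν : G → ℝ≥0∞) (a : G) (l : List G) : wl ν (a :: l) = ν a * wl ν l := by
  simp [wl]

lemma wl_append (ν : G → ℝ≥0∞) (l t : List G) : wl ν (l ++ t) = wl ν l * wl ν t := by
  simp [wl]

lemma wl_eq_prod (ν : G → ℝ≥0∞) (l : List G) :
    wl ν l = ∏ j : Fin l.length, ν (l.get j) := by
  induction l with
  | nil => simp [wl]
  | cons a l ih =>
      rw [wl_cons, ih]
      show ν a * ∏ j : Fin l.length, ν (l.get j)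
          = ∏ j : Fin (l.length + 1), ν ((a :: l).get j)
      rw [Fin.prod_univ_succ]
      rfl

/-- first-passage prefixes of a common list agree -/
lemma PP_prefix_unique {x y : G} {S : Set G} {l₁ l₂ s : List G}
    (h₁ : PP x y S l₁) (h₂ : PP x y S l₂) (p₁ : l₁ <+: s) (p₂ : l₂ <+: s) :
    l₁ = l₂ := by
  have key : ∀ {a b : List G}, PP x y S a → PP x y S b → a <+: b → a = b := by
    intro a b ha hb hab
    rcases eq_or_lt_of_le hab.length_le with h | h
    · exact hab.eq_of_length h
    · exfalso
      have hax : pos x b a.length = y := by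
        have : b.take a.length = a := (List.prefix_iff_eq_take.mp hab).symm
        have h1 : pos x b a.length = x * a.prod := by simp [pos, this]
        rw [h1, ← pos_length x a]
        exact ha.1
      exact hb.2 a.length h (hax ▸ Set.mem_union_right _ rfl)
  rcases List.prefix_or_prefix_of_prefix p₁ p₂ with h | h
  · exact key h₁ h₂ h
  · exact (key h₂ h₁ h).symm

section Bridge

variable (ν : G → ℝ≥0∞) (x y : G) (S : Set G)

/-- increments of a `Fin`-path -/
def incr {k : ℕ} (f : Fin (k + 1) → G) : Fin k → G :=
  fun j => (f j.castSucc)⁻¹ * f j.succ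

lemma pathVal {k : ℕ} (f : Fin (k + 1) → G) :
    ∀ n (h : n < k + 1), f ⟨n, h⟩ = pos (f 0) (List.ofFn (incr f)) n := by
  intro n
  induction n with
  | zero => intro h; rw [pos_zero]; rfl
  | succ n ih =>
      intro h
      have hn : n < k := by omega
      have hlen : n < (List.ofFn (incr f)).length := by simpa using hn
      rw [pos_succ _ _ hlen, ← ih (by omega)]
      have hget : (List.ofFn (incr f)).get ⟨n, hlen⟩ = incr f ⟨n, hn⟩ := by
        simp [List.get_ofFn]
      rw [hget]
      show f _ = f _ * ((f (Fin.castSucc ⟨n, hn⟩))⁻¹ * f (Fin.succ ⟨n, hn⟩))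
      rw [Fin.castSucc_mk, Fin.succ_mk, mul_inv_cancel_left]

lemma wl_ofFn_incr {k : ℕ} (f : Fin (k + 1) → G) :
    wl ν (List.ofFn (incr f)) = ∏ j : Fin k, ν ((f j.castSucc)⁻¹ * f j.succ) := by
  rw [wl, List.map_ofFn, List.prod_ofFn]
  rfl

/-- The path subtype used in `FPE`. -/
abbrev PathT (k : ℕ) :=
  {f : Fin (k + 1) → G // f 0 = x ∧ f (Fin.last k) = y ∧
      ∀ j : Fin k, f j.castSucc ∉ S ∪ {y}}

lemma FPE_eq_FPL : FPE ν x y S = FPL ν x y S := by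
  have hsig : FPE ν x y S =
      ∑' q : Σ k : ℕ, PathT x y S k,
        ∏ j : Fin q.1, ν ((q.2.1 j.castSucc)⁻¹ * q.2.1 j.succ) := by
    rw [FPE, ← ENNReal.tsum_sigma]
  rw [hsig]
  apply le_antisymm
  · -- injection (k, f) ↦ list of increments
    have hΦ : ∀ q : Σ k : ℕ, PathT x y S k, PP x y S (List.ofFn (incr q.2.1)) := by
      rintro ⟨k, f, hf0, hfl, hfa⟩
      have hv : ∀ n (h : n < k + 1), f ⟨n, h⟩ = pos x (List.ofFn (incr f)) n := by
        intro n h; rw [← hf0]; exact pathVal f n h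
      constructor
      · have : (List.ofFn (incr f)).length = k := by simp
        rw [this, ← hv k (by omega)]
        exact hfl
      · intro n hn
        have hn' : n < k := by simpa using hn
        rw [← hv n (by omega)]
        have := hfa ⟨n, hn'⟩
        rwa [Fin.castSucc_mk] at this
    set Φ : (Σ k : ℕ, PathT x y S k) → {l : List G // PP x y S l} :=
      fun q => ⟨List.ofFn (incr q.2.1), hΦ q⟩ with hΦdef
    have hinj : Function.Injective Φ := by
      rintro ⟨k, f, hf⟩ ⟨k', f', hf'⟩ h
      simp only [hΦdef, Subtype.mk.injEq] at h
      have hk : k = k' := by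
        have := congrArg List.length h
        simpa using this
      subst hk
      have hfe : f = f' := by
        funext j
        rcases j with ⟨n, hn⟩
        rw [pathVal f n hn, pathVal f' n hn, h, show f 0 = f' 0 by rw [hf.1, hf'.1]]
      subst hfe
      rfl
    calc ∑' q : Σ k : ℕ, PathT x y S k,
          ∏ j : Fin q.1, ν ((q.2.1 j.castSucc)⁻¹ * q.2.1 j.succ)
        = ∑' q : Σ k : ℕ, PathT x y S k, wl ν (Φ q).1 := by
          apply tsum_congr; rintro ⟨k, f, hf⟩
          exact (wl_ofFn_incr ν f).symm
      _ ≤ FPL ν x y S := ENNReal.tsum_comp_le_tsum_of_injective hinj _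
  · -- injection l ↦ (length, positions)
    have hΨ : ∀ l : {l : List G // PP x y S l},
        (fun j : Fin (l.1.length + 1) => pos x l.1 j) 0 = x ∧
        (fun j : Fin (l.1.length + 1) => pos x l.1 j) (Fin.last l.1.length) = y ∧
        ∀ j : Fin l.1.length,
          (fun j : Fin (l.1.length + 1) => pos x l.1 j) j.castSucc ∉ S ∪ {y} := by
      rintro ⟨l, hl⟩
      refine ⟨pos_zero x l, ?_, ?_⟩
      · exact hl.1
      · intro j
        exact hl.2 j.1 j.2
    set Ψ : {l : List G // PP x y S l} → (Σ k : ℕ, PathT x y S k) :=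
      fun l => ⟨l.1.length, ⟨fun j : Fin (l.1.length + 1) => pos x l.1 j, hΨ l⟩⟩ with hΨdef
    have hinj : Function.Injective Ψ := by
      rintro ⟨l, hl⟩ ⟨l', hl'⟩ h
      have hlen : l.length = l'.length := congrArg (fun q => q.1) h
      have hfun := congrArg (fun q : Σ k : ℕ, PathT x y S k =>
        (fun n : ℕ => if hn : n < q.1 + 1 then q.2.1 ⟨n, hn⟩ else 1)) h
      simp only [hΨdef] at hfun
      have hp : ∀ n ≤ l.length, pos x l n = pos x l' n := by
        intro n hn
        have h3 := congrFun hfun n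
        rw [dif_pos (by omega : n < l.length + 1),
          dif_pos (by omega : n < l'.length + 1)] at h3
        exact h3
      apply Subtype.ext
      apply List.ext_get hlen
      intro n h₁ h₂
      have e1 : pos x l (n + 1) = pos x l n * l.get ⟨n, h₁⟩ := pos_succ x l h₁
      have e2 : pos x l' (n + 1) = pos x l' n * l'.get ⟨n, h₂⟩ := pos_succ x l' h₂
      have := hp (n + 1) (by omega)
      rw [e1, e2, hp n (by omega)] at this
      exact mul_left_cancel this
    calc FPL ν x y S = ∑' l : {l : List G // PP x y S l},
          ∏ j : Fin (Ψ l).1, ν (((Ψ l).2.1 j.castSucc)⁻¹ * (Ψ l).2.1 j.succ) := by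
          apply tsum_congr; rintro ⟨l, hl⟩
          rw [wl_eq_prod]
          apply Finset.prod_congr rfl
          intro j _
          congr 1
          show l.get j = (pos x l j.castSucc.1)⁻¹ * pos x l j.succ.1
          have : pos x l (j.1 + 1) = pos x l j.1 * l.get j := pos_succ x l j.2
          rw [show (j.succ.1 : ℕ) = j.1 + 1 from rfl, this]
          show l.get j = (pos x l j.1)⁻¹ * (pos x l j.1 * l.get j)
          group
      _ ≤ _ := ENNReal.tsum_comp_le_tsum_of_injective hinj _

end Bridge

section TotalMass

variable (ν : G → ℝ≥0∞)

/-- total weight of all increment lists of length `N` -/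
def TL (N : ℕ) : ℝ≥0∞ := ∑' s : {s : List G // s.length = N}, wl ν s

def consEquiv (N : ℕ) : G × {s : List G // s.length = N} ≃ {s : List G // s.length = N + 1} where
  toFun q := ⟨q.1 :: q.2.1, by simp [q.2.2]⟩
  invFun s := (s.1.head (by
      intro e
      have h2 := s.2
      rw [e] at h2
      exact Nat.succ_ne_zero N h2.symm),
    ⟨s.1.tail, by simp [s.2]⟩)
  left_inv q := by
    rcases q with ⟨a, s, hs⟩
    simp
  right_inv s := by
    rcases s with ⟨l, hl⟩
    simp [List.cons_head_tail]

lemma TL_eq_one (hν : ∑' a, ν a = 1) : ∀ N, TL ν N = 1 := by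
  intro N
  induction N with
  | zero =>
      rw [TL, tsum_eq_single (⟨[], rfl⟩ : {s : List G // s.length = 0})]
      · exact wl_nil ν
      · rintro ⟨s, hs⟩ hne
        exact absurd (Subtype.ext (List.length_eq_zero_iff.mp hs)) hne
  | succ N ih =>
      calc TL ν (N + 1)
          = ∑' q : G × {s : List G // s.length = N}, wl ν ((consEquiv N) q).1 :=
            (Equiv.tsum_eq (consEquiv N)
              (fun s : {s : List G // s.length = N + 1} => wl ν s.1)).symm
        _ = ∑' q : G × {s : List G // s.length = N}, ν q.1 * wl ν q.2.1 := by
            apply tsum_congr; rintro ⟨a, s, hs⟩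
            simp [consEquiv, wl_cons]
        _ = ∑' (a : G) (s : {s : List G // s.length = N}), ν a * wl ν s.1 :=
            ENNReal.tsum_prod (f := fun (a : G) (s : {s : List G // s.length = N}) => ν a * wl ν s.1)
        _ = ∑' a : G, ν a * TL ν N := by
            apply tsum_congr; intro a
            exact ENNReal.tsum_mul_left
        _ = ∑' a : G, ν a := by rw [ih]; simp
        _ = 1 := hν

lemma FPL_le_one (hν : ∑' a, ν a = 1) (x y : G) (S : Set G) : FPL ν x y S ≤ 1 := by
  rw [FPL, ENNReal.tsum_eq_iSup_sum]
  apply iSup_le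
  intro F
  set N := F.sup (fun l => l.1.length) with hN
  have hlen : ∀ l ∈ F, l.1.length ≤ N := fun l hl => by
    rw [hN]; exact Finset.le_sup (f := fun l : {l : List G // PP x y S l} => l.1.length) hl
  have step1 : ∀ l : {l : List G // PP x y S l}, l ∈ F →
      wl ν l.1 = ∑' t : {t : List G // t.length = N - l.1.length}, wl ν (l.1 ++ t.1) := by
    intro l hl
    have : (∑' t : {t : List G // t.length = N - l.1.length}, wl ν (l.1 ++ t.1))
        = wl ν l.1 * TL ν (N - l.1.length) := by
      rw [TL, ← ENNReal.tsum_mul_left]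
      apply tsum_congr; intro t
      exact wl_append ν l.1 t.1
    rw [this, TL_eq_one ν hν, mul_one]
  calc ∑ l ∈ F, wl ν l.1
      = ∑ l ∈ F, ∑' t : {t : List G // t.length = N - l.1.length}, wl ν (l.1 ++ t.1) :=
        Finset.sum_congr rfl (fun l hl => step1 l hl)
    _ = ∑' l : {l // l ∈ F}, ∑' t : {t : List G // t.length = N - l.1.1.length},
          wl ν (l.1.1 ++ t.1) := (Finset.tsum_subtype F _).symm
    _ = ∑' q : Σ l : {l // l ∈ F}, {t : List G // t.length = N - l.1.1.length},
          wl ν (q.1.1.1 ++ q.2.1) := (ENNReal.tsum_sigma _).symm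
    _ ≤ ∑' s : {s : List G // s.length = N}, wl ν s.1 := by
        set Φ : (Σ l : {l // l ∈ F}, {t : List G // t.length = N - l.1.1.length}) →
            {s : List G // s.length = N} :=
          fun q => ⟨q.1.1.1 ++ q.2.1, by
            have h1 : q.1.1.1.length ≤ N := hlen q.1.1 q.1.2
            have h2 : q.2.1.length = N - q.1.1.1.length := q.2.2
            simp [h2]; omega⟩ with hΦdef
        have hinj : Function.Injective Φ := by
          rintro ⟨⟨⟨l₁, hp₁⟩, hF₁⟩, ⟨t₁, ht₁⟩⟩ ⟨⟨⟨l₂, hp₂⟩, hF₂⟩, ⟨t₂, ht₂⟩⟩ h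
          simp only [hΦdef, Subtype.mk.injEq] at h
          have hl : l₁ = l₂ :=
            PP_prefix_unique hp₁ hp₂ ⟨t₁, rfl⟩ ⟨t₂, h.symm⟩
          subst hl
          have ht : t₁ = t₂ := List.append_cancel_left h
          subst ht
          rfl
        exact ENNReal.tsum_comp_le_tsum_of_injective hinj (fun s => wl ν s.1)
    _ = 1 := TL_eq_one ν hν N

end TotalMass

section Push

variable {H : Type*} [Group H] (p : G →* H) (ν : G → ℝ≥0∞)

lemma pos_map (l : List G) (n : ℕ) : pos 1 (l.map p) n = p (pos 1 l n) := by
  simp [pos, ← List.map_take, ← map_list_prod]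

/-- lifts of `h :: t` split as a lift of `h` and a lift of `t` -/
def liftEquiv (h : H) (t : List H) :
    {a : G // p a = h} × {l : List G // l.map p = t} ≃ {l : List G // l.map p = h :: t} where
  toFun q := ⟨q.1.1 :: q.2.1, by simp [q.1.2, q.2.2]⟩
  invFun l :=
    match l with
    | ⟨[], hl⟩ => absurd hl (by simp)
    | ⟨a :: r, hl⟩ =>
        (⟨a, by simp at hl; exact hl.1⟩, ⟨r, by simp at hl; exact hl.2⟩)
  left_inv := by
    rintro ⟨⟨a, ha⟩, ⟨l, hl⟩⟩
    rfl
  right_inv := by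
    rintro ⟨l, hl⟩
    match l, hl with
    | [], hl => exact absurd hl (by simp)
    | a :: r, hl => rfl

/-- product of pushforward weights along a list = total weight of lifts -/
lemma prod_map_push (t : List H) :
    wl (fun h => ∑' a : {a : G // p a = h}, ν a) t
      = ∑' l : {l : List G // l.map p = t}, wl ν l := by
  induction t with
  | nil =>
      rw [wl_nil, tsum_eq_single (⟨[], by simp⟩ : {l : List G // l.map p = []})]
      · exact (wl_nil ν).symm
      · rintro ⟨l, hl⟩ hne
        exact absurd (Subtype.ext (List.map_eq_nil_iff.mp hl)) hne
  | cons h t ih =>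
      rw [wl_cons, ih]
      calc (∑' a : {a : G // p a = h}, ν a.1) * ∑' l : {l : List G // l.map p = t}, wl ν l.1
          = ∑' a : {a : G // p a = h}, ν a.1 * ∑' l : {l : List G // l.map p = t}, wl ν l.1 :=
            ENNReal.tsum_mul_right.symm
        _ = ∑' (a : {a : G // p a = h}) (l : {l : List G // l.map p = t}), ν a.1 * wl ν l.1 := by
            apply tsum_congr; intro a
            exact ENNReal.tsum_mul_left.symm
        _ = ∑' q : {a : G // p a = h} × {l : List G // l.map p = t}, ν q.1.1 * wl ν q.2.1 :=
            (ENNReal.tsum_prod (f := fun (a : {a : G // p a = h}) (l : {l : List G // l.map p = t}) => ν a.1 * wl ν l.1)).symm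
        _ = ∑' q : {a : G // p a = h} × {l : List G // l.map p = t},
              wl ν ((liftEquiv p h t) q).1 := by
            apply tsum_congr; rintro ⟨⟨a, ha⟩, ⟨l, hl⟩⟩
            exact (wl_cons ν a l).symm
        _ = ∑' l : {l : List G // l.map p = h :: t}, wl ν l.1 :=
            Equiv.tsum_eq (liftEquiv p h t) (fun l : {l : List G // l.map p = h :: t} => wl ν l.1)

open Classical in
/-- the key inequality, in list form -/
lemma key_list (hν : ∑' a, ν a = 1) (g : G) :
    FPL ν 1 g ∅ ≤ FPL (fun h => ∑' a : {a : G // p a = h}, ν a) 1 (p g) ∅ := by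
  classical
  set ν' : H → ℝ≥0∞ := fun h => ∑' a : {a : G // p a = h}, ν a with hν'
  -- prefix type: first hits the fiber of `p g` at its end
  set PreT := {l : List G // p (1 * l.prod) = p g ∧ ∀ n < l.length, p (pos 1 l n) ≠ p g}
    with hPreT
  -- Step 1 : FPL ν 1 g ∅ ≤ ∑' l : PreT, wl ν l
  have step1 : FPL ν 1 g ∅ ≤ ∑' l : PreT, wl ν l.1 := by
    have hex : ∀ l : {l : List G // PP 1 g ∅ l},
        ∃ n, n ≤ l.1.length ∧ p (pos 1 l.1 n) = p g := by
      rintro ⟨l, hl⟩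
      exact ⟨l.length, le_refl _, by rw [hl.1]⟩
    set nf : {l : List G // PP 1 g ∅ l} → ℕ := fun l => Nat.find (hex l) with hnf
    have hΦpre : ∀ l : {l : List G // PP 1 g ∅ l},
        p (1 * (l.1.take (nf l)).prod) = p g ∧
        ∀ n < (l.1.take (nf l)).length, p (pos 1 (l.1.take (nf l)) n) ≠ p g := by
      rintro ⟨l, hl⟩
      obtain ⟨hle, hfib⟩ := Nat.find_spec (hex ⟨l, hl⟩)
      have hnfe : nf ⟨l, hl⟩ = Nat.find (hex ⟨l, hl⟩) := rfl
      have hle' : nf ⟨l, hl⟩ ≤ l.length := hle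
      have hfib' : p (pos 1 l (nf ⟨l, hl⟩)) = p g := hfib
      have hlen : (l.take (nf ⟨l, hl⟩)).length = nf ⟨l, hl⟩ := by
        simp [List.length_take]
        exact hle'
      constructor
      · have : (1 : G) * (l.take (nf ⟨l, hl⟩)).prod = pos 1 l (nf ⟨l, hl⟩) := rfl
        rw [this]; exact hfib'
      · intro n hn
        rw [hlen] at hn
        have hpos : pos 1 (l.take (nf ⟨l, hl⟩)) n = pos 1 l n := by
          have hmin : n ⊓ nf ⟨l, hl⟩ = n := min_eq_left (le_of_lt hn)
          simp [pos, List.take_take, hmin]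
        rw [hpos]
        have hmin := Nat.find_min (hex ⟨l, hl⟩) (hnfe ▸ hn)
        intro hc
        exact hmin ⟨by omega, hc⟩
    have hΦsuf : ∀ l : {l : List G // PP 1 g ∅ l},
        PP (1 * (l.1.take (nf l)).prod) g ∅ (l.1.drop (nf l)) := by
      rintro ⟨l, hl⟩
      obtain ⟨hle, hfib⟩ := Nat.find_spec (hex ⟨l, hl⟩)
      set n := nf ⟨l, hl⟩ with hndef
      have hle' : n ≤ l.length := hle
      have hposadd : ∀ m, pos (1 * (l.take n).prod) (l.drop n) m = pos 1 l (n + m) := by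
        intro m
        simp only [pos, List.take_add, List.prod_append, one_mul, mul_assoc]
      constructor
      · have hlen : (l.drop n).length = l.length - n := by simp
        rw [hlen, hposadd]
        have : n + (l.length - n) = l.length := by omega
        rw [this]
        exact hl.1
      · intro m hm
        rw [hposadd]
        have hm' : m < l.length - n := by simpa using hm
        have hlt : n + m < l.length := by omega
        exact hl.2 (n + m) hlt
    set Φ : {l : List G // PP 1 g ∅ l} →
        (Σ l : PreT, {t : List G // PP (1 * l.1.prod) g ∅ t}) :=
      fun l => ⟨⟨l.1.take (nf l), hΦpre l⟩, ⟨l.1.drop (nf l), hΦsuf l⟩⟩ with hΦdef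
    have hinj : Function.Injective Φ := by
      intro l l' h
      have h1 := congrArg (fun q : (Σ l : PreT, {t : List G // PP (1 * l.1.prod) g ∅ t}) =>
        q.1.1) h
      have h2 := congrArg (fun q : (Σ l : PreT, {t : List G // PP (1 * l.1.prod) g ∅ t}) =>
        q.2.1) h
      simp only [hΦdef] at h1 h2
      change l.1.drop (nf l) = l'.1.drop (nf l') at h2
      apply Subtype.ext
      rw [← List.take_append_drop (nf l) l.1, ← List.take_append_drop (nf l') l'.1, h1, h2]
    calc FPL ν 1 g ∅
        = ∑' l : {l : List G // PP 1 g ∅ l}, wl ν ((Φ l).1.1) * wl ν ((Φ l).2.1) := by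
          apply tsum_congr; intro l
          simp only [hΦdef]
          rw [← wl_append, List.take_append_drop]
      _ ≤ ∑' q : (Σ l : PreT, {t : List G // PP (1 * l.1.prod) g ∅ t}),
            wl ν q.1.1 * wl ν q.2.1 :=
          ENNReal.tsum_comp_le_tsum_of_injective hinj
            (fun q => wl ν q.1.1 * wl ν q.2.1)
      _ = ∑' l : PreT, ∑' t : {t : List G // PP (1 * l.1.prod) g ∅ t},
            wl ν l.1 * wl ν t.1 :=
          ENNReal.tsum_sigma
            (f := fun (l : PreT) (t : {t : List G // PP (1 * l.1.prod) g ∅ t}) =>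
              wl ν l.1 * wl ν t.1)
      _ ≤ ∑' l : PreT, wl ν l.1 := by
          apply ENNReal.tsum_le_tsum
          intro l
          rw [ENNReal.tsum_mul_left]
          calc wl ν l.1 * FPL ν (1 * l.1.prod) g ∅ ≤ wl ν l.1 * 1 := by
                exact mul_le_mul_right (FPL_le_one ν hν _ _ _) _
            _ = wl ν l.1 := mul_one _
  -- Step 2 : ∑' l : PreT, wl ν l ≤ FPL ν' 1 (p g) ∅
  have step2 : (∑' l : PreT, wl ν l.1) ≤ FPL ν' 1 (p g) ∅ := by
    have hrw : FPL ν' 1 (p g) ∅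
        = ∑' q : (Σ t : {t : List H // PP 1 (p g) ∅ t}, {l : List G // l.map p = t.1}),
            wl ν q.2.1 := by
      rw [FPL,
        ENNReal.tsum_sigma
          (f := fun (t : {t : List H // PP 1 (p g) ∅ t}) (l : {l : List G // l.map p = t.1}) =>
            wl ν l.1)]
      apply tsum_congr; intro t
      exact prod_map_push p ν t.1
    rw [hrw]
    have hΦ : ∀ l : PreT, PP 1 (p g) ∅ (l.1.map p) := by
      rintro ⟨l, h1, h2⟩
      constructor
      · have : (l.map p).length = l.length := by simp
        rw [this, pos_map, pos_length]
        exact h1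
      · intro n hn
        have hn' : n < l.length := by simpa using hn
        rw [pos_map]
        intro hc
        rcases hc with hc | hc
        · exact hc
        · exact h2 n hn' hc
    set Φ : PreT → (Σ t : {t : List H // PP 1 (p g) ∅ t}, {l : List G // l.map p = t.1}) :=
      fun l => ⟨⟨l.1.map p, hΦ l⟩, ⟨l.1, rfl⟩⟩ with hΦdef
    have hinj : Function.Injective Φ := by
      intro l l' h
      have h2 := congrArg
        (fun q : (Σ t : {t : List H // PP 1 (p g) ∅ t}, {l : List G // l.map p = t.1}) =>
          q.2.1) h
      change l.1 = l'.1 at h2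
      exact Subtype.ext h2
    exact ENNReal.tsum_comp_le_tsum_of_injective hinj (fun q => wl ν q.2.1)
  exact le_trans step1 step2

end Push

section Transfer

variable {K : Type*} [Group K]

lemma FP_eq_toReal (ρ : K → ℝ) (hρ : ∀ a, 0 ≤ ρ a) (x y : K) (S : Set K)
    (hfin : FPE (fun a => ENNReal.ofReal (ρ a)) x y S ≠ ⊤) :
    FP ρ x y S = (FPE (fun a => ENNReal.ofReal (ρ a)) x y S).toReal := by
  set ν : K → ℝ≥0∞ := fun a => ENNReal.ofReal (ρ a) with hν
  set E : ℕ → ℝ≥0∞ := fun k =>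
    ∑' f : {f : Fin (k + 1) → K // f 0 = x ∧ f (Fin.last k) = y ∧
        ∀ j : Fin k, f j.castSucc ∉ S ∪ {y}},
      ∏ j : Fin k, ν ((f.1 j.castSucc)⁻¹ * f.1 j.succ) with hE
  have hEfin : ∀ k, E k ≠ ⊤ := by
    intro k
    exact ne_top_of_le_ne_top hfin (ENNReal.le_tsum k)
  have hinner : ∀ k,
      (∑' f : {f : Fin (k + 1) → K // f 0 = x ∧ f (Fin.last k) = y ∧
          ∀ j : Fin k, f j.castSucc ∉ S ∪ {y}},
        ∏ j : Fin k, ρ ((f.1 j.castSucc)⁻¹ * f.1 j.succ)) = (E k).toReal := by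
    intro k
    rw [hE]
    rw [ENNReal.tsum_toReal_eq (fun f =>
      (ENNReal.prod_lt_top (fun j _ => ENNReal.ofReal_lt_top)).ne)]
    apply tsum_congr
    intro f
    rw [← ENNReal.ofReal_prod_of_nonneg (fun j _ => hρ _)]
    rw [ENNReal.toReal_ofReal (Finset.prod_nonneg (fun j _ => hρ _))]
  rw [FP]
  have : (∑' k : ℕ,
      ∑' f : {f : Fin (k + 1) → K // f 0 = x ∧ f (Fin.last k) = y ∧
          ∀ j : Fin k, f j.castSucc ∉ S ∪ {y}},
        ∏ j : Fin k, ρ ((f.1 j.castSucc)⁻¹ * f.1 j.succ))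
      = ∑' k : ℕ, (E k).toReal := tsum_congr hinner
  rw [this, ← ENNReal.tsum_toReal_eq hEfin]
  rfl

end Transfer

end

end Stmt17Aux

open scoped ENNReal in
open Stmt17Aux in
/-- the first-passage function does not decrease under pushforward of the
measure by a group homomorphism. -/
theorem stmt17 {G H : Type*} [Group G] [Group H] [Countable G] [Countable H]
    (p : G →* H) (μ : G → ℝ) (hμ : IsProb μ)
    (μ' : H → ℝ) (hμ' : ∀ h : H, μ' h = ∑' a : {a : G // p a = h}, μ (a : G))
    (g : G) :
    FP μ 1 g ∅ ≤ FP μ' 1 (p g) ∅ := by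
  obtain ⟨hpos, hsum⟩ := hμ
  have hμs : Summable μ := by
    by_contra h
    rw [tsum_eq_zero_of_not_summable h] at hsum
    norm_num at hsum
  set ν : G → ℝ≥0∞ := fun a => ENNReal.ofReal (μ a) with hνdef
  have hν : ∑' a, ν a = 1 := by
    rw [hνdef, ← ENNReal.ofReal_tsum_of_nonneg hpos hμs, hsum, ENNReal.ofReal_one]
  set ν' : H → ℝ≥0∞ := fun h => ∑' a : {a : G // p a = h}, ν a with hν'def
  have hμ'eq : ∀ h, ENNReal.ofReal (μ' h) = ν' h := by
    intro h
    rw [hμ' h, hν'def]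
    exact ENNReal.ofReal_tsum_of_nonneg (fun a => hpos _) (hμs.subtype _)
  have hν'sum : ∑' h, ν' h = 1 := by
    rw [hν'def]
    calc ∑' h : H, ∑' a : {a : G // p a = h}, ν a
        = ∑' q : (Σ h : H, {a : G // p a = h}), ν q.2.1 := (ENNReal.tsum_sigma _).symm
      _ = ∑' a : G, ν a := Equiv.tsum_eq (Equiv.sigmaFiberEquiv p) ν
      _ = 1 := hν
  have hb1 : FPE ν 1 g ∅ ≤ 1 := by
    rw [FPE_eq_FPL]
    exact FPL_le_one ν hν 1 g ∅
  have hb2 : FPE ν' 1 (p g) ∅ ≤ 1 := by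
    rw [FPE_eq_FPL]
    exact FPL_le_one ν' hν'sum 1 (p g) ∅
  have key : FPE ν 1 g ∅ ≤ FPE ν' 1 (p g) ∅ := by
    rw [FPE_eq_FPL, FPE_eq_FPL]
    exact key_list p ν hν g
  have t1 : FP μ 1 g ∅ = (FPE ν 1 g ∅).toReal :=
    FP_eq_toReal μ hpos 1 g ∅ (ne_top_of_le_ne_top ENNReal.one_ne_top hb1)
  have hμ'pos : ∀ h, 0 ≤ μ' h := by
    intro h
    rw [hμ' h]
    exact tsum_nonneg (fun a => hpos _)
  have hfe : (fun h => ENNReal.ofReal (μ' h)) = ν' := funext hμ'eq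
  have t2 : FP μ' 1 (p g) ∅ = (FPE ν' 1 (p g) ∅).toReal := by
    have := FP_eq_toReal μ' hμ'pos 1 (p g) ∅ (by
      rw [hfe]
      exact ne_top_of_le_ne_top ENNReal.one_ne_top hb2)
    rwa [hfe] at this
  rw [t1, t2]
  exact ENNReal.toReal_mono (ne_top_of_le_ne_top ENNReal.one_ne_top hb2) key
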